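/- arXiv:1904.09543 — 2 statements merged into one kernel-verified Lean document; each statement's English description precedes it below -/
import Mathlib

section
/- If two disks of radii r_d > 0 and r > 0 have centers at distance y with |r_d − r| ≤ y ≤ r_d + r, then the disk of radius (r + r_d − y)/2 centered at the point on the segment joining the two centers at distance (r_d − r + y)/2 from the center of the first disk is contained in the intersection of the two disks. Consequently the intersection area is at least π((r + r_d − y)/2)². -/
open MeasureTheory Metric Real Filter ProbabilityTheory Pointwise
open scoped ENNReal

noncomputable section

/-- The Euclidean plane. -/
abbrev E2 := EuclideanSpace ℝ (Fin 2)

/-- The point `(y, 0)` on the x-axis. -/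
def pt (y : ℝ) : E2 := (WithLp.equiv 2 (Fin 2 → ℝ)).symm ![y, 0]

/-- Area of the intersection (lens) of a disk of radius `a` centered at the origin and a disk
of radius `b` whose center is at distance `y` from the origin. -/
def lensArea (a b y : ℝ) : ℝ :=
  (volume (closedBall (0 : E2) a ∩ closedBall (pt y) b)).toReal

/-- The uniform probability measure on the closed disk `B(0, rd)`. -/
def unifBall (rd : ℝ) : Measure E2 :=
  (volume (closedBall (0 : E2) rd))⁻¹ • volume.restrict (closedBall (0 : E2) rd)

/-- Intensity measure `lf · Leb` restricted to the disk `B(0, rd)`. -/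
def ballIntensity (lf rd : ℝ) : Measure E2 :=
  ENNReal.ofReal lf • volume.restrict (closedBall (0 : E2) rd)

/-- `Φ` is a Poisson point process with (finite) intensity measure `Λ` under `P`:
counts on measurable sets are Poisson distributed with mean `Λ A`, and counts on
pairwise disjoint sets are independent. -/
def IsPoissonPP {Ω : Type*} [MeasurableSpace Ω] (P : Measure Ω) (Λ : Measure E2)
    (Φ : Ω → Finset E2) : Prop :=
  (∀ A : Set E2, MeasurableSet A →
      Measurable (fun ω => ((Φ ω : Set E2) ∩ A).ncard) ∧
      ∀ n : ℕ, P {ω | ((Φ ω : Set E2) ∩ A).ncard = n} = poissonPMF (Λ A).toNNReal n) ∧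
  (∀ (n : ℕ) (A : Fin n → Set E2), (∀ i, MeasurableSet (A i)) →
      Pairwise (Function.onFun Disjoint A) →
      iIndepFun (fun i ω => ((Φ ω : Set E2) ∩ A i).ncard) P)

/-- The Gauss error function. -/
def erf (x : ℝ) : ℝ := (2 / Real.sqrt π) * ∫ t in (0:ℝ)..x, Real.exp (-t ^ 2)

lemma dist_pt_pt (a b : ℝ) : dist (pt a) (pt b) = |a - b| := by
  rw [EuclideanSpace.dist_eq]
  simp [pt, Fin.sum_univ_two, Real.sqrt_sq_eq_abs, Real.dist_eq]

lemma pt_zero : pt 0 = 0 := by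
  ext i
  fin_cases i <;> simp [pt]

theorem inscribed_disk_lower_bound (rd r y : ℝ) (hrd : 0 < rd) (hr : 0 < r)
    (hy1 : |rd - r| ≤ y) (hy2 : y ≤ rd + r) :
    closedBall (pt ((rd - r + y) / 2)) ((r + rd - y) / 2) ⊆
        closedBall (0 : E2) rd ∩ closedBall (pt y) r ∧
      ENNReal.ofReal (π * ((r + rd - y) / 2) ^ 2) ≤
        volume (closedBall (0 : E2) rd ∩ closedBall (pt y) r) := by
  have habs := abs_le.mp hy1
  have h1 : rd - r + y ≥ 0 := by linarith [habs.1]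
  have h2 : y - (rd - r + y) / 2 ≥ 0 := by linarith [habs.2]
  have hrad : (0:ℝ) ≤ (r + rd - y) / 2 := by linarith
  have hsub : closedBall (pt ((rd - r + y) / 2)) ((r + rd - y) / 2) ⊆
      closedBall (0 : E2) rd ∩ closedBall (pt y) r := by
    apply Set.subset_inter
    · apply closedBall_subset_closedBall'
      rw [← pt_zero, dist_pt_pt]
      rw [abs_of_nonneg (by linarith)]
      linarith
    · apply closedBall_subset_closedBall'
      rw [dist_pt_pt, abs_of_nonpos (by linarith)]
      linarith
  refine ⟨hsub, ?_⟩
  calc ENNReal.ofReal (π * ((r + rd - y) / 2) ^ 2)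
      = volume (closedBall (pt ((rd - r + y) / 2)) ((r + rd - y) / 2)) := by
        rw [EuclideanSpace.volume_closedBall]
        simp only [Fintype.card_fin]
        rw [show ((2:ℕ):ℝ) / 2 + 1 = 2 by norm_num, Real.Gamma_two]
        rw [← ENNReal.ofReal_pow hrad, ← ENNReal.ofReal_mul (by positivity)]
        congr 1
        rw [Real.sq_sqrt Real.pi_pos.le]
        ring
    _ ≤ volume (closedBall (0 : E2) rd ∩ closedBall (pt y) r) := measure_mono hsub
end
end

section
/- For the integral F(r) = 1 − ∫₀^{r_d} e^{−λ_f min(π r², π r_d², A(r,r_d,y))}(2y/r_d²) dy with 0 < r ≤ 2r_d, replacing the lens area A(r,r_d,y) on the range |r_d − r| ≤ y ≤ r_d by its rectangle upper bound (r + r_d − y)·2min(r, r_d) yields an explicit upper bound: F(r) ≤ 1 − [A₀(r) + (2/(α r_d²))(e^{−α r}(r_d − 1/α) + e^{−α²/λ_f}(1/α − |r_d − r|))], where α = 2λ_f min(r, r_d) and A₀(r) = e^{−λ_f min(π r², π r_d²)}(r_d − r)²/r_d². -/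
open MeasureTheory Metric Real Filter ProbabilityTheory Pointwise
open scoped ENNReal

noncomputable section

lemma coord_abs_le_norm (z : E2) (i : Fin 2) : |z i| ≤ ‖z‖ := by
  rw [EuclideanSpace.norm_eq, ← Real.sqrt_sq_eq_abs (z i)]
  apply Real.sqrt_le_sqrt
  have := Finset.single_le_sum (f := fun j => ‖z j‖ ^ 2) (fun j _ => by positivity)
    (Finset.mem_univ i)
  simpa [sq_abs, Real.norm_eq_abs] using this

lemma lensArea_le (r rd y : ℝ) (hr : 0 < r) (hrd : 0 < rd) (hy : y ≤ rd) :
    lensArea r rd y ≤ (r + rd - y) * (2 * min r rd) := by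
  have hm : 0 < min r rd := lt_min hr hrd
  have hm1 : min r rd ≤ r := min_le_left _ _
  have hm2 : min r rd ≤ rd := min_le_right _ _
  set m := min r rd with hmdef
  set S : Set (Fin 2 → ℝ) := Set.univ.pi fun i => Set.Icc (![y - rd, -m] i) (![r, m] i) with hS
  have hSmeas : MeasurableSet S := MeasurableSet.univ_pi fun i => measurableSet_Icc
  have hsub : closedBall (0 : E2) r ∩ closedBall (pt y) rd ⊆
      (MeasurableEquiv.toLp 2 (Fin 2 → ℝ)).symm ⁻¹' S := by
    intro x ⟨hx1, hx2⟩
    rw [mem_closedBall, dist_zero_right] at hx1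
    rw [mem_closedBall, dist_eq_norm] at hx2
    have h0 := abs_le.1 ((coord_abs_le_norm x 0).trans hx1)
    have h1 := abs_le.1 ((coord_abs_le_norm x 1).trans hx1)
    have h0' : |x 0 - y| ≤ rd := by
      have := (coord_abs_le_norm (x - pt y) 0).trans hx2
      simpa [pt, WithLp.equiv_symm_apply, PiLp.toLp_apply] using this
    have h1' : |x 1| ≤ rd := by
      have := (coord_abs_le_norm (x - pt y) 1).trans hx2
      simpa [pt, WithLp.equiv_symm_apply, PiLp.toLp_apply] using this
    have h0' := abs_le.1 h0'
    have h1' := abs_le.1 h1'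
    have hxm1 : -m ≤ x 1 := by
      rcases min_cases r rd with ⟨h,_⟩|⟨h,_⟩ <;> rw [hmdef, h] <;> linarith [h1.1, h1'.1]
    have hxm2 : x 1 ≤ m := le_min h1.2 h1'.2
    intro i _
    fin_cases i <;>
      simp only [MeasurableEquiv.coe_toLp_symm, MeasurableEquiv.coe_mk, Set.mem_Icc,
        MeasurableEquiv.toLp_symm_apply, Fin.zero_eta, Fin.mk_one,
        Matrix.cons_val_zero, Matrix.cons_val_one, Matrix.head_cons] <;>
      constructor <;> first | linarith [h0.1, h0.2, h0'.1, h0'.2] | exact hxm1 | exact hxm2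
  have hvol : volume ((MeasurableEquiv.toLp 2 (Fin 2 → ℝ)).symm ⁻¹' S)
      = ENNReal.ofReal (r - (y - rd)) * ENNReal.ofReal (m - -m) := by
    rw [(EuclideanSpace.volume_preserving_symm_measurableEquiv_toLp (Fin 2)).measure_preimage
      hSmeas.nullMeasurableSet, hS, volume_pi_pi]
    simp [Real.volume_Icc, Fin.prod_univ_two]
  calc lensArea r rd y ≤ (volume ((MeasurableEquiv.toLp 2 (Fin 2 → ℝ)).symm ⁻¹' S)).toReal := by
        apply ENNReal.toReal_mono _ (measure_mono hsub)
        rw [hvol]; exact ENNReal.mul_ne_top ENNReal.ofReal_ne_top ENNReal.ofReal_ne_top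
    _ = (r + rd - y) * (2 * m) := by
        rw [hvol, ← ENNReal.ofReal_mul (by linarith), ENNReal.toReal_ofReal (by nlinarith)]
        ring

lemma continuous_pt : Continuous pt := by
  unfold pt
  exact (PiLp.continuous_toLp 2 (fun _ : Fin 2 => ℝ)).comp (continuous_pi fun i => by
    fin_cases i
    · exact continuous_id
    · exact continuous_const)

lemma measurable_lensArea (r rd : ℝ) : Measurable (lensArea r rd) := by
  have hset : MeasurableSet {p : ℝ × E2 |
      p.2 ∈ closedBall (0:E2) r ∧ p.2 ∈ closedBall (pt p.1) rd} := by
    apply IsClosed.measurableSet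
    apply IsClosed.inter
    · exact isClosed_le (by fun_prop) continuous_const
    · exact isClosed_le (Continuous.dist continuous_snd (continuous_pt.comp continuous_fst))
        continuous_const
  have h := measurable_measure_prodMk_left (ν := (volume : Measure E2)) hset
  have : (lensArea r rd) = fun y => (volume (Prod.mk y ⁻¹'
      {p : ℝ × E2 | p.2 ∈ closedBall (0:E2) r ∧ p.2 ∈ closedBall (pt p.1) rd})).toReal := by
    rfl
  rw [this]
  exact h.ennreal_toReal

lemma lensArea_nonneg (r rd y : ℝ) : 0 ≤ lensArea r rd y := ENNReal.toReal_nonneg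

theorem contact_cdf_explicit_upper_bound (lf rd r : ℝ) (hlf : 0 < lf) (hrd : 0 < rd)
    (hr0 : 0 < r) (hr2 : r ≤ 2 * rd) (α A0 : ℝ)
    (hα : α = 2 * lf * min r rd)
    (hA0 : A0 = Real.exp (-(lf * min (π * r ^ 2) (π * rd ^ 2))) * (rd - r) ^ 2 / rd ^ 2) :
    1 - ∫ y in (0:ℝ)..rd,
        Real.exp (-(lf * min (min (π * r ^ 2) (π * rd ^ 2)) (lensArea r rd y))) *
          (2 * y / rd ^ 2) ≤
      1 - (A0 + (2 / (α * rd ^ 2)) *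
        (Real.exp (-(α * r)) * (rd - 1 / α) +
          Real.exp (-(α ^ 2 / lf)) * (1 / α - |rd - r|))) := by
  have hm : 0 < min r rd := lt_min hr0 hrd
  have hα0 : 0 < α := by rw [hα]; positivity
  set L := |rd - r| with hLdef
  have hL0 : 0 ≤ L := abs_nonneg _
  have hLrd : L ≤ rd := by rw [hLdef, abs_le]; constructor <;> linarith
  set C := Real.exp (-(lf * min (π * r ^ 2) (π * rd ^ 2))) with hC
  set f : ℝ → ℝ := fun y =>
    Real.exp (-(lf * min (min (π * r ^ 2) (π * rd ^ 2)) (lensArea r rd y))) * (2 * y / rd ^ 2)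
    with hf
  have hfmeas : Measurable f := by
    apply Measurable.mul
    · exact (((measurable_const.min (measurable_lensArea r rd)).const_mul lf).neg).exp
    · fun_prop
  have hexp_le_one : ∀ y : ℝ,
      Real.exp (-(lf * min (min (π * r ^ 2) (π * rd ^ 2)) (lensArea r rd y))) ≤ 1 := by
    intro y
    rw [Real.exp_le_one_iff]
    have h1 : (0:ℝ) ≤ min (min (π * r ^ 2) (π * rd ^ 2)) (lensArea r rd y) :=
      le_min (le_min (by positivity) (by positivity)) (lensArea_nonneg r rd y)
    nlinarith
  have hInt : ∀ a b : ℝ, IntervalIntegrable f volume a b := by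
    intro a b
    rw [intervalIntegrable_iff]
    refine Integrable.mono' (g := fun _ => 2 * max |a| |b| / rd ^ 2) ?_
      hfmeas.aestronglyMeasurable.restrict ?_
    · exact integrableOn_const
        (lt_of_le_of_lt (measure_mono Set.uIoc_subset_uIcc) isCompact_uIcc.measure_lt_top).ne
    · filter_upwards [ae_restrict_mem measurableSet_uIoc] with y hy
      have habs : |y| ≤ max |a| |b| := by
        have h1 := le_abs_self a; have h2 := le_abs_self b
        have h3 := neg_abs_le a; have h4 := neg_abs_le b
        have h5 := le_max_left |a| |b|; have h6 := le_max_right |a| |b|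
        have hy1 := hy.1; have hy2 := hy.2
        rcases min_cases a b with ⟨hmin,_⟩|⟨hmin,_⟩ <;> rcases max_cases a b with ⟨hmax,_⟩|⟨hmax,_⟩ <;>
          rw [abs_le] <;> constructor <;> linarith
      rw [hf]
      simp only [norm_mul, Real.norm_eq_abs, Real.abs_exp]
      have h2 : |2 * y / rd ^ 2| ≤ 2 * max |a| |b| / rd ^ 2 := by
        rw [abs_div, abs_of_pos (by positivity : (0:ℝ) < rd ^ 2), abs_mul]
        gcongr
        norm_num
      calc Real.exp _ * |2 * y / rd ^ 2| ≤ 1 * (2 * max |a| |b| / rd ^ 2) :=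
            mul_le_mul (hexp_le_one y) h2 (abs_nonneg _) one_pos.le
        _ = 2 * max |a| |b| / rd ^ 2 := one_mul _
  -- piece 1
  have h1 : C * L ^ 2 / rd ^ 2 ≤ ∫ y in (0:ℝ)..L, f y := by
    have heq : ∫ y in (0:ℝ)..L, (2 * C / rd ^ 2) * y = C * L ^ 2 / rd ^ 2 := by
      rw [intervalIntegral.integral_const_mul, integral_id]
      ring
    rw [← heq]
    apply intervalIntegral.integral_mono_on hL0
      ((continuous_const.mul continuous_id).intervalIntegrable 0 L) (hInt 0 L)
    intro y hy
    have h2y : 0 ≤ 2 * y / rd ^ 2 := by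
      have := hy.1; positivity
    have hexp : C ≤ Real.exp (-(lf * min (min (π * r ^ 2) (π * rd ^ 2)) (lensArea r rd y))) := by
      rw [hC]
      apply Real.exp_le_exp.2
      have hmin := min_le_left (min (π * r ^ 2) (π * rd ^ 2)) (lensArea r rd y)
      nlinarith [hlf.le]
    calc (2 * C / rd ^ 2) * y = C * (2 * y / rd ^ 2) := by ring
      _ ≤ f y := mul_le_mul_of_nonneg_right hexp h2y
  -- piece 2
  set g : ℝ → ℝ := fun y => Real.exp (-(α * (r + rd - y))) * (2 * y / rd ^ 2) with hg
  have h2 : ∫ y in L..rd, g y ≤ ∫ y in L..rd, f y := by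
    apply intervalIntegral.integral_mono_on hLrd
      (Continuous.intervalIntegrable (by fun_prop) L rd) (hInt L rd)
    intro y hy
    have hy0 : 0 ≤ y := hL0.trans hy.1
    have hbound := lensArea_le r rd y hr0 hrd hy.2
    have hle : lf * min (min (π * r ^ 2) (π * rd ^ 2)) (lensArea r rd y) ≤ α * (r + rd - y) := by
      have h3 := min_le_right (min (π * r ^ 2) (π * rd ^ 2)) (lensArea r rd y)
      rw [hα]
      nlinarith [hlf.le]
    have hexp : Real.exp (-(α * (r + rd - y))) ≤
        Real.exp (-(lf * min (min (π * r ^ 2) (π * rd ^ 2)) (lensArea r rd y))) :=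
      Real.exp_le_exp.2 (by linarith)
    exact mul_le_mul_of_nonneg_right hexp (by positivity)
  -- FTC for g
  set H : ℝ → ℝ := fun y => Real.exp (-(α * (r + rd - y))) * (2 * y / α - 2 / α ^ 2) / rd ^ 2
    with hH
  have hderiv : ∀ y ∈ Set.uIcc L rd, HasDerivAt H (g y) y := by
    intro y _
    have hlin : HasDerivAt (fun z : ℝ => -(α * (r + rd - z))) α y := by
      have heq : (fun z : ℝ => -(α * (r + rd - z))) = fun z => α * z - α * (r + rd) := by
        funext z; ring
      rw [heq]
      simpa using ((hasDerivAt_id y).const_mul α).sub_const (α * (r + rd))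
    have hexp : HasDerivAt (fun z : ℝ => Real.exp (-(α * (r + rd - z))))
        (Real.exp (-(α * (r + rd - y))) * α) y := hlin.exp
    have hpoly : HasDerivAt (fun z : ℝ => 2 * z / α - 2 / α ^ 2) (2 / α) y := by
      have := (((hasDerivAt_id y).const_mul (2:ℝ)).div_const α).sub_const (2 / α ^ 2)
      simpa using this
    have := (hexp.mul hpoly).div_const (rd ^ 2)
    refine this.congr_deriv ?_
    rw [hg]
    field_simp
    ring
  have hgcont : Continuous g := by fun_prop
  have hFTC : ∫ y in L..rd, g y = H rd - H L :=
    intervalIntegral.integral_eq_sub_of_hasDerivAt hderiv (hgcont.intervalIntegrable L rd)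
  -- algebra
  have hkey : α * (r + rd - L) = α ^ 2 / lf := by
    rw [hα, hLdef]
    rcases abs_cases (rd - r) with ⟨h, h'⟩ | ⟨h, h'⟩
    · rw [h, min_eq_left (by linarith : r ≤ rd)]
      field_simp; ring
    · rw [h, min_eq_right (by linarith : rd ≤ r)]
      field_simp; ring
  have hT : H rd - H L = (2 / (α * rd ^ 2)) *
      (Real.exp (-(α * r)) * (rd - 1 / α) + Real.exp (-(α ^ 2 / lf)) * (1 / α - L)) := by
    have e1 : -(α * (r + rd - rd)) = -(α * r) := by ring
    have e2 : -(α * (r + rd - L)) = -(α ^ 2 / lf) := by rw [hkey]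
    rw [hH]
    simp only [e1, e2]
    field_simp
    ring
  -- combine
  have hsplit : (∫ y in (0:ℝ)..rd, f y) = (∫ y in (0:ℝ)..L, f y) + ∫ y in L..rd, f y :=
    (intervalIntegral.integral_add_adjacent_intervals (hInt 0 L) (hInt L rd)).symm
  have hA0' : A0 = C * L ^ 2 / rd ^ 2 := by
    rw [hA0, hC, hLdef, sq_abs]
  apply sub_le_sub_left
  rw [hsplit, hA0']
  have := hT ▸ hFTC
  linarith [h1, h2]
end
end
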